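/- (Non-granularity of the YWIS lower approximation.) Let X = {x₁,…,x₅}, a = (0, 0, 0.2, 0.91, 1), R(x,y) = 1 − |a(x) − a(y)| (a T_L-equivalence relation), and A = (1, 1, 1, 0, 0). For y ∈ X let g_y(x) = I_L(R(x,y), A(x)) and define the YWIS lower approximation of A with identity RIM quantifier by L(y) = ⨍ g_y dμ*_y, the Sugeno integral of g_y w.r.t. the monotone measure μ*_y(E) = (sum of the |E| smallest values of R(·,y)) / (Σ_{x∈X} R(x,y)). Then L(x₄) > min_{x∈X} I_L(R(x,x₄), L(x)); hence L is not a fixed point of the classical lower approximation and in particular L is not granularly representable w.r.t. R. -/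

import Mathlib

/-- The Łukasiewicz t-norm. -/
noncomputable def TL (x y : ℝ) : ℝ := max 0 (x + y - 1)

/-- The Łukasiewicz (residual) implicator. -/
noncomputable def IL (x y : ℝ) : ℝ := min 1 (1 - x + y)

/-- `R` is a `T`-equivalence relation: a `[0,1]`-valued reflexive, symmetric and
`T`-transitive fuzzy relation. -/
structure IsTEquiv {X : Type*} (T : ℝ → ℝ → ℝ) (R : X → X → ℝ) : Prop where
  mem : ∀ x y, R x y ∈ Set.Icc (0:ℝ) 1
  refl : ∀ x, R x x = 1
  symm : ∀ x y, R x y = R y x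
  trans : ∀ x y z, T (R x y) (R y z) ≤ R x z

/-- A monotone measure on a finite set `X`. -/
structure IsMonotoneMeasure {X : Type*} (μ : Set X → ℝ) : Prop where
  empty : μ ∅ = 0
  univ : μ Set.univ = 1
  mono : ∀ E F : Set X, E ⊆ F → μ E ≤ μ F

/-- The Sugeno integral of `f : X → ℝ` w.r.t. `μ` on the finite nonempty set `X`:
`max_i min(μ(A*_i), f(x*_i))` where `x*` enumerates `X` with
`f(x*_1) ≤ … ≤ f(x*_n)` and `A*_i = {x*_i, …, x*_n}`. -/
noncomputable def sugeno {X : Type*} [Fintype X] [Nonempty X] (μ : Set X → ℝ) (f : X → ℝ) : ℝ :=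
  let e : Fin (Fintype.card X) ≃ X := (Fintype.equivFin X).symm
  let σ : Equiv.Perm (Fin (Fintype.card X)) := Tuple.sort (f ∘ e)
  haveI : Nonempty (Fin (Fintype.card X)) := Fin.pos_iff_nonempty.mp Fintype.card_pos
  Finset.univ.sup' Finset.univ_nonempty
    (fun i => min (μ {x | ∃ j, i ≤ j ∧ e (σ j) = x}) (f (e (σ i))))

/-- `A` is granularly representable w.r.t. `T` and `R`: for every `y`,
`A(y)` is the supremum of the values `T(λ, R(x,y))` over all granules
`R_λ(x) = (z ↦ T(λ, R(x,z)))` that are (pointwise) contained in `A`. -/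
def GranRep {X : Type*} (T : ℝ → ℝ → ℝ) (R : X → X → ℝ) (A : X → ℝ) : Prop :=
  ∀ y, A y = sSup {v | ∃ l ∈ Set.Icc (0:ℝ) 1, ∃ x, (∀ z, T l (R x z) ≤ A z) ∧ v = T l (R x y)}

/-- `sortVal g i` is the (0-indexed) `i`-th smallest of the values of `g`. -/
noncomputable def sortVal {n : ℕ} (g : Fin n → ℝ) (i : Fin n) : ℝ := g (Tuple.sort g i)


lemma sugeno_eq {X : Type*} [Fintype X] [Nonempty X] (μ : Set X → ℝ)
    (hμ : ∀ E F : Set X, E ⊆ F → μ E ≤ μ F) (f : X → ℝ) :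
    sugeno μ f =
      Finset.univ.sup' Finset.univ_nonempty (fun x => min (μ {y | f x ≤ f y}) (f x)) := by
  classical
  unfold sugeno
  set e : Fin (Fintype.card X) ≃ X := (Fintype.equivFin X).symm with he
  set σ : Equiv.Perm (Fin (Fintype.card X)) := Tuple.sort (f ∘ e) with hσ
  haveI : Nonempty (Fin (Fintype.card X)) := Fin.pos_iff_nonempty.mp Fintype.card_pos
  have hmono : Monotone ((f ∘ e) ∘ σ) := Tuple.monotone_sort (f ∘ e)
  apply le_antisymm
  · apply Finset.sup'_le
    intro i _
    refine le_trans (min_le_min (hμ _ _ ?_) le_rfl)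
      (Finset.le_sup' (fun x => min (μ {y | f x ≤ f y}) (f x)) (Finset.mem_univ (e (σ i))))
    rintro x ⟨j, hij, rfl⟩
    exact hmono hij
  · apply Finset.sup'_le
    intro x _
    have hmem : σ.symm (e.symm x) ∈ Finset.univ.filter (fun j => f x ≤ f (e (σ j))) := by
      simp
    set i := (Finset.univ.filter (fun j => f x ≤ f (e (σ j)))).min' ⟨_, hmem⟩ with hi
    have hi_mem := Finset.min'_mem (Finset.univ.filter (fun j => f x ≤ f (e (σ j)))) ⟨_, hmem⟩
    rw [Finset.mem_filter] at hi_mem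
    have hfi : f x ≤ f (e (σ i)) := hi_mem.2
    have hle : f (e (σ i)) ≤ f x := by
      have h2 := Finset.min'_le _ _ hmem
      have h3 : f (e (σ i)) ≤ f (e (σ (σ.symm (e.symm x)))) := hmono h2
      simpa using h3
    have hfx : f (e (σ i)) = f x := le_antisymm hle hfi
    refine le_trans ?_ (Finset.le_sup'
      (fun i => min (μ {x | ∃ j, i ≤ j ∧ e (σ j) = x}) (f (e (σ i)))) (Finset.mem_univ i))
    rw [hfx]
    refine min_le_min (hμ _ _ ?_) le_rfl
    intro y hy
    refine ⟨σ.symm (e.symm y), Finset.min'_le _ _ ?_, by simp⟩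
    simp only [Finset.mem_filter, Finset.mem_univ, true_and]
    simpa using hy

lemma sup5 (h : Fin 5 → ℝ) :
    Finset.univ.sup' Finset.univ_nonempty h = h 0 ⊔ (h 1 ⊔ (h 2 ⊔ (h 3 ⊔ h 4))) := by
  apply le_antisymm
  · apply Finset.sup'_le
    intro i _
    fin_cases i <;> simp [le_sup_iff, le_refl]
  · simp only [sup_le_iff]
    refine ⟨?_, ?_, ?_, ?_, ?_⟩ <;> exact Finset.le_sup' h (Finset.mem_univ _)

lemma inf5 (h : Fin 5 → ℝ) :
    Finset.univ.inf' Finset.univ_nonempty h = h 0 ⊓ (h 1 ⊓ (h 2 ⊓ (h 3 ⊓ h 4))) := by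
  apply le_antisymm
  · simp only [le_inf_iff]
    refine ⟨?_, ?_, ?_, ?_, ?_⟩ <;> exact Finset.inf'_le h (Finset.mem_univ _)
  · apply Finset.le_inf'
    intro i _
    fin_cases i <;> simp [inf_le_iff, le_refl]

lemma coe_card (s : Finset (Fin 5)) : (↑s : Set (Fin 5)).toFinite.toFinset = s := by
  rw [Set.toFinite_toFinset]; simp

noncomputable def aD : Fin 5 → ℝ := ![0, 0, 1/5, 91/100, 1]
noncomputable def RD : Fin 5 → Fin 5 → ℝ := fun x y => 1 - |aD x - aD y|
noncomputable def AD : Fin 5 → ℝ := ![1, 1, 1, 0, 0]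
noncomputable def μD : Fin 5 → Set (Fin 5) → ℝ := fun y E =>
  (∑ k ∈ Finset.univ.filter (fun k : Fin 5 => (k : ℕ) < E.toFinite.toFinset.card),
      sortVal (fun x => RD x y) k) / (∑ x, RD x y)
noncomputable def LD : Fin 5 → ℝ := fun y => sugeno (μD y) (fun x => IL (RD x y) (AD x))

set_option maxHeartbeats 2000000 in
theorem stmt19aux :
    IsTEquiv TL RD ∧
    Finset.univ.inf' Finset.univ_nonempty (fun x => IL (RD x 3) (LD x)) < LD 3 ∧
    ¬ GranRep TL RD LD := by
  classical
  have hadef : aD = ![0, 0, 1/5, 91/100, 1] := rfl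
  have hRdef : RD = fun x y => 1 - |aD x - aD y| := rfl
  have hAdef : AD = ![1, 1, 1, 0, 0] := rfl
  have hμdef : μD = fun y E =>
      (∑ k ∈ Finset.univ.filter (fun k : Fin 5 => (k : ℕ) < E.toFinite.toFinset.card),
          sortVal (fun x => RD x y) k) / (∑ x, RD x y) := rfl
  have hLdef : LD = fun y => sugeno (μD y) (fun x => IL (RD x y) (AD x)) := rfl
  have hRval : ∀ x y, RD x y =
      ![![1, 1, 4/5, 9/100, 0],
        ![1, 1, 4/5, 9/100, 0],
        ![4/5, 4/5, 1, 29/100, 1/5],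
        ![9/100, 9/100, 29/100, 1, 91/100],
        ![0, 0, 1/5, 91/100, 1]] x y := by
    intro x y
    fin_cases x <;> fin_cases y <;>
      norm_num [hRdef, hadef, abs_of_nonneg, abs_of_nonpos]
  have ha : ∀ i, (0:ℝ) ≤ aD i ∧ aD i ≤ 1 := by
    intro i; fin_cases i <;> norm_num [hadef]
  have hteq : IsTEquiv TL RD := by
    refine ⟨?_, ?_, ?_, ?_⟩
    · intro x y
      obtain ⟨h1, h2⟩ := ha x; obtain ⟨h3, h4⟩ := ha y
      have h5 : |aD x - aD y| ≤ 1 := abs_sub_le_iff.mpr ⟨by linarith, by linarith⟩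
      have h6 := abs_nonneg (aD x - aD y)
      simp only [hRdef, Set.mem_Icc]
      constructor <;> linarith
    · intro x; simp [hRdef]
    · intro x y; simp only [hRdef]; rw [abs_sub_comm]
    · intro x y z
      have h1 := abs_sub_le (aD x) (aD y) (aD z)
      obtain ⟨hx1, hx2⟩ := ha x; obtain ⟨hz1, hz2⟩ := ha z
      have h5 : |aD x - aD z| ≤ 1 := abs_sub_le_iff.mpr ⟨by linarith, by linarith⟩
      simp only [hRdef, TL]
      apply max_le <;> linarith
  have hR0 : ∀ x y, 0 ≤ RD x y := fun x y => (hteq.mem x y).1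
  have hden : ∀ y, 0 < ∑ x, RD x y := by
    intro y
    apply Finset.sum_pos' (fun i _ => hR0 i y)
    exact ⟨y, Finset.mem_univ y, by rw [hteq.refl]; norm_num⟩
  have hsv0 : ∀ y k, 0 ≤ sortVal (fun x => RD x y) k := by
    intro y k; rw [sortVal]; exact hR0 _ _
  have hμmono : ∀ y (E F : Set (Fin 5)), E ⊆ F → μD y E ≤ μD y F := by
    intro y E F hEF
    simp only [hμdef]
    apply div_le_div_of_nonneg_right _ (hden y).le
    apply Finset.sum_le_sum_of_subset_of_nonneg
    · apply Finset.monotone_filter_right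
      intro k _ hk
      exact lt_of_lt_of_le hk
        (Finset.card_le_card (Set.Finite.toFinset_subset_toFinset.mpr hEF))
    · intro i _ _; exact hsv0 y i
  have hμs : ∀ (y : Fin 5) (s : Finset (Fin 5)),
      μD y ↑s = (∑ k ∈ Finset.univ.filter (fun k : Fin 5 => (k : ℕ) < s.card),
        sortVal (fun x => RD x y) k) / (∑ x, RD x y) := by
    intro y s; simp only [hμdef, coe_card]
  have hs3 : ∀ t : Fin 5 → ℝ, (∑ k ∈ ({0,1,2} : Finset (Fin 5)), t k) = t 0 + t 1 + t 2 := by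
    intro t
    rw [show ({0,1,2} : Finset (Fin 5)) = insert 0 (insert 1 {2}) from rfl,
      Finset.sum_insert (by decide), Finset.sum_insert (by decide), Finset.sum_singleton]
    ring
  have hs4 : ∀ t : Fin 5 → ℝ,
      (∑ k ∈ ({0,1,2,3} : Finset (Fin 5)), t k) = t 0 + t 1 + t 2 + t 3 := by
    intro t
    rw [show ({0,1,2,3} : Finset (Fin 5)) = insert 0 (insert 1 (insert 2 {3})) from rfl,
      Finset.sum_insert (by decide), Finset.sum_insert (by decide),
      Finset.sum_insert (by decide), Finset.sum_singleton]
    ring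
  have hsv0 : ∀ k, sortVal (fun x => RD x 0) k = ![0, 9/100, 4/5, 1, 1] k := by
    have hτ : ((fun x => RD x 0) ∘
        (⟨![4,3,2,0,1], ![3,4,2,1,0], by decide, by decide⟩ : Equiv.Perm (Fin 5)))
        = (fun x => RD x 0) ∘ (Tuple.sort (fun x => RD x 0)) := by
      rw [Tuple.comp_sort_eq_comp_iff_monotone]
      intro i j hij
      fin_cases i <;> fin_cases j <;> (try exact absurd hij (by decide)) <;>
        norm_num [Matrix.cons_val_two, Matrix.cons_val_three, Matrix.cons_val_four, hRval, Equiv.coe_fn_mk]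
    intro k
    have h := congrFun hτ k
    simp only [Function.comp_apply] at h
    rw [sortVal, ← h]
    fin_cases k <;> norm_num [Matrix.cons_val_two, Matrix.cons_val_three, Matrix.cons_val_four, hRval, Equiv.coe_fn_mk]
  have hden0 : (∑ x, RD x 0) = 289/100 := by
    rw [Fin.sum_univ_five]; norm_num [Matrix.cons_val_two, Matrix.cons_val_three, Matrix.cons_val_four, hRval]
  have hm0_0 : μD 0 ↑({0,1,2,4} : Finset (Fin 5)) = 189/289 := by
    rw [hμs, show Finset.univ.filter
        (fun k : Fin 5 => (k : ℕ) < (({0,1,2,4} : Finset (Fin 5))).card) = ({0,1,2,3} : Finset (Fin 5)) from by decide,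
      hs4, hden0]
    norm_num [Matrix.cons_val_two, Matrix.cons_val_three, Matrix.cons_val_four, hsv0]
  have hm0_1 : μD 0 ↑(Finset.univ : Finset (Fin 5)) = 1 := by
    rw [hμs, show Finset.univ.filter
        (fun k : Fin 5 => (k : ℕ) < ((Finset.univ : Finset (Fin 5))).card) = Finset.univ from by decide,
      Fin.sum_univ_five, hden0]
    norm_num [Matrix.cons_val_two, Matrix.cons_val_three, Matrix.cons_val_four, hsv0]
  have hg0 : ∀ x, IL (RD x 0) (AD x) = ![1, 1, 1, 91/100, 1] x := by
    intro x; fin_cases x <;> norm_num [Matrix.cons_val_two, Matrix.cons_val_three, Matrix.cons_val_four, IL, hRval, hAdef]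
  have hset0 : ∀ x : Fin 5, {z : Fin 5 | IL (RD x 0) (AD x) ≤ IL (RD z 0) (AD z)} =
      ↑(![({0,1,2,4} : Finset (Fin 5)), {0,1,2,4}, {0,1,2,4}, Finset.univ, {0,1,2,4}] x) := by
    intro x; ext z
    fin_cases x <;> fin_cases z <;> norm_num [Matrix.cons_val_two, Matrix.cons_val_three, Matrix.cons_val_four, hg0] <;> decide
  have hL0 : LD 0 = 91/100 := by
    simp only [hLdef]
    rw [sugeno_eq _ (hμmono 0), sup5]
    simp only [hset0, Matrix.cons_val_zero, Matrix.cons_val_one, Matrix.cons_val_two,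
      Matrix.cons_val_three, Matrix.cons_val_four, Matrix.cons_val_succ, Matrix.head_cons, Matrix.vecHead,
      Matrix.vecTail, Function.comp_apply]
    rw [hm0_0, hm0_1]
    norm_num [Matrix.cons_val_two, Matrix.cons_val_three, Matrix.cons_val_four, hg0, min_def, max_def]
  have hsv1 : ∀ k, sortVal (fun x => RD x 1) k = ![0, 9/100, 4/5, 1, 1] k := by
    have hτ : ((fun x => RD x 1) ∘
        (⟨![4,3,2,0,1], ![3,4,2,1,0], by decide, by decide⟩ : Equiv.Perm (Fin 5)))
        = (fun x => RD x 1) ∘ (Tuple.sort (fun x => RD x 1)) := by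
      rw [Tuple.comp_sort_eq_comp_iff_monotone]
      intro i j hij
      fin_cases i <;> fin_cases j <;> (try exact absurd hij (by decide)) <;>
        norm_num [Matrix.cons_val_two, Matrix.cons_val_three, Matrix.cons_val_four, hRval, Equiv.coe_fn_mk]
    intro k
    have h := congrFun hτ k
    simp only [Function.comp_apply] at h
    rw [sortVal, ← h]
    fin_cases k <;> norm_num [Matrix.cons_val_two, Matrix.cons_val_three, Matrix.cons_val_four, hRval, Equiv.coe_fn_mk]
  have hden1 : (∑ x, RD x 1) = 289/100 := by
    rw [Fin.sum_univ_five]; norm_num [Matrix.cons_val_two, Matrix.cons_val_three, Matrix.cons_val_four, hRval]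
  have hm1_0 : μD 1 ↑({0,1,2,4} : Finset (Fin 5)) = 189/289 := by
    rw [hμs, show Finset.univ.filter
        (fun k : Fin 5 => (k : ℕ) < (({0,1,2,4} : Finset (Fin 5))).card) = ({0,1,2,3} : Finset (Fin 5)) from by decide,
      hs4, hden1]
    norm_num [Matrix.cons_val_two, Matrix.cons_val_three, Matrix.cons_val_four, hsv1]
  have hm1_1 : μD 1 ↑(Finset.univ : Finset (Fin 5)) = 1 := by
    rw [hμs, show Finset.univ.filter
        (fun k : Fin 5 => (k : ℕ) < ((Finset.univ : Finset (Fin 5))).card) = Finset.univ from by decide,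
      Fin.sum_univ_five, hden1]
    norm_num [Matrix.cons_val_two, Matrix.cons_val_three, Matrix.cons_val_four, hsv1]
  have hg1 : ∀ x, IL (RD x 1) (AD x) = ![1, 1, 1, 91/100, 1] x := by
    intro x; fin_cases x <;> norm_num [Matrix.cons_val_two, Matrix.cons_val_three, Matrix.cons_val_four, IL, hRval, hAdef]
  have hset1 : ∀ x : Fin 5, {z : Fin 5 | IL (RD x 1) (AD x) ≤ IL (RD z 1) (AD z)} =
      ↑(![({0,1,2,4} : Finset (Fin 5)), {0,1,2,4}, {0,1,2,4}, Finset.univ, {0,1,2,4}] x) := by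
    intro x; ext z
    fin_cases x <;> fin_cases z <;> norm_num [Matrix.cons_val_two, Matrix.cons_val_three, Matrix.cons_val_four, hg1] <;> decide
  have hL1 : LD 1 = 91/100 := by
    simp only [hLdef]
    rw [sugeno_eq _ (hμmono 1), sup5]
    simp only [hset1, Matrix.cons_val_zero, Matrix.cons_val_one, Matrix.cons_val_two,
      Matrix.cons_val_three, Matrix.cons_val_four, Matrix.cons_val_succ, Matrix.head_cons, Matrix.vecHead,
      Matrix.vecTail, Function.comp_apply]
    rw [hm1_0, hm1_1]
    norm_num [Matrix.cons_val_two, Matrix.cons_val_three, Matrix.cons_val_four, hg1, min_def, max_def]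
  have hsv2 : ∀ k, sortVal (fun x => RD x 2) k = ![1/5, 29/100, 4/5, 4/5, 1] k := by
    have hτ : ((fun x => RD x 2) ∘
        (⟨![4,3,0,1,2], ![2,3,4,1,0], by decide, by decide⟩ : Equiv.Perm (Fin 5)))
        = (fun x => RD x 2) ∘ (Tuple.sort (fun x => RD x 2)) := by
      rw [Tuple.comp_sort_eq_comp_iff_monotone]
      intro i j hij
      fin_cases i <;> fin_cases j <;> (try exact absurd hij (by decide)) <;>
        norm_num [Matrix.cons_val_two, Matrix.cons_val_three, Matrix.cons_val_four, hRval, Equiv.coe_fn_mk]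
    intro k
    have h := congrFun hτ k
    simp only [Function.comp_apply] at h
    rw [sortVal, ← h]
    fin_cases k <;> norm_num [Matrix.cons_val_two, Matrix.cons_val_three, Matrix.cons_val_four, hRval, Equiv.coe_fn_mk]
  have hden2 : (∑ x, RD x 2) = 309/100 := by
    rw [Fin.sum_univ_five]; norm_num [Matrix.cons_val_two, Matrix.cons_val_three, Matrix.cons_val_four, hRval]
  have hm2_0 : μD 2 ↑({0,1,2} : Finset (Fin 5)) = 43/103 := by
    rw [hμs, show Finset.univ.filter
        (fun k : Fin 5 => (k : ℕ) < (({0,1,2} : Finset (Fin 5))).card) = ({0,1,2} : Finset (Fin 5)) from by decide,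
      hs3, hden2]
    norm_num [Matrix.cons_val_two, Matrix.cons_val_three, Matrix.cons_val_four, hsv2]
  have hm2_1 : μD 2 ↑({0,1,2,4} : Finset (Fin 5)) = 209/309 := by
    rw [hμs, show Finset.univ.filter
        (fun k : Fin 5 => (k : ℕ) < (({0,1,2,4} : Finset (Fin 5))).card) = ({0,1,2,3} : Finset (Fin 5)) from by decide,
      hs4, hden2]
    norm_num [Matrix.cons_val_two, Matrix.cons_val_three, Matrix.cons_val_four, hsv2]
  have hm2_2 : μD 2 ↑(Finset.univ : Finset (Fin 5)) = 1 := by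
    rw [hμs, show Finset.univ.filter
        (fun k : Fin 5 => (k : ℕ) < ((Finset.univ : Finset (Fin 5))).card) = Finset.univ from by decide,
      Fin.sum_univ_five, hden2]
    norm_num [Matrix.cons_val_two, Matrix.cons_val_three, Matrix.cons_val_four, hsv2]
  have hg2 : ∀ x, IL (RD x 2) (AD x) = ![1, 1, 1, 71/100, 4/5] x := by
    intro x; fin_cases x <;> norm_num [Matrix.cons_val_two, Matrix.cons_val_three, Matrix.cons_val_four, IL, hRval, hAdef]
  have hset2 : ∀ x : Fin 5, {z : Fin 5 | IL (RD x 2) (AD x) ≤ IL (RD z 2) (AD z)} =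
      ↑(![({0,1,2} : Finset (Fin 5)), {0,1,2}, {0,1,2}, Finset.univ, {0,1,2,4}] x) := by
    intro x; ext z
    fin_cases x <;> fin_cases z <;> norm_num [Matrix.cons_val_two, Matrix.cons_val_three, Matrix.cons_val_four, hg2] <;> decide
  have hL2 : LD 2 = 71/100 := by
    simp only [hLdef]
    rw [sugeno_eq _ (hμmono 2), sup5]
    simp only [hset2, Matrix.cons_val_zero, Matrix.cons_val_one, Matrix.cons_val_two,
      Matrix.cons_val_three, Matrix.cons_val_four, Matrix.cons_val_succ, Matrix.head_cons, Matrix.vecHead,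
      Matrix.vecTail, Function.comp_apply]
    rw [hm2_0, hm2_1, hm2_2]
    norm_num [Matrix.cons_val_two, Matrix.cons_val_three, Matrix.cons_val_four, hg2, min_def, max_def]
  have hsv3 : ∀ k, sortVal (fun x => RD x 3) k = ![9/100, 9/100, 29/100, 91/100, 1] k := by
    have hτ : ((fun x => RD x 3) ∘
        (⟨![0,1,2,4,3], ![0,1,2,4,3], by decide, by decide⟩ : Equiv.Perm (Fin 5)))
        = (fun x => RD x 3) ∘ (Tuple.sort (fun x => RD x 3)) := by
      rw [Tuple.comp_sort_eq_comp_iff_monotone]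
      intro i j hij
      fin_cases i <;> fin_cases j <;> (try exact absurd hij (by decide)) <;>
        norm_num [Matrix.cons_val_two, Matrix.cons_val_three, Matrix.cons_val_four, hRval, Equiv.coe_fn_mk]
    intro k
    have h := congrFun hτ k
    simp only [Function.comp_apply] at h
    rw [sortVal, ← h]
    fin_cases k <;> norm_num [Matrix.cons_val_two, Matrix.cons_val_three, Matrix.cons_val_four, hRval, Equiv.coe_fn_mk]
  have hden3 : (∑ x, RD x 3) = 119/50 := by
    rw [Fin.sum_univ_five]; norm_num [Matrix.cons_val_two, Matrix.cons_val_three, Matrix.cons_val_four, hRval]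
  have hm3_0 : μD 3 ↑({0,1,2} : Finset (Fin 5)) = 47/238 := by
    rw [hμs, show Finset.univ.filter
        (fun k : Fin 5 => (k : ℕ) < (({0,1,2} : Finset (Fin 5))).card) = ({0,1,2} : Finset (Fin 5)) from by decide,
      hs3, hden3]
    norm_num [Matrix.cons_val_two, Matrix.cons_val_three, Matrix.cons_val_four, hsv3]
  have hm3_1 : μD 3 ↑({0,1,2,4} : Finset (Fin 5)) = 69/119 := by
    rw [hμs, show Finset.univ.filter
        (fun k : Fin 5 => (k : ℕ) < (({0,1,2,4} : Finset (Fin 5))).card) = ({0,1,2,3} : Finset (Fin 5)) from by decide,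
      hs4, hden3]
    norm_num [Matrix.cons_val_two, Matrix.cons_val_three, Matrix.cons_val_four, hsv3]
  have hm3_2 : μD 3 ↑(Finset.univ : Finset (Fin 5)) = 1 := by
    rw [hμs, show Finset.univ.filter
        (fun k : Fin 5 => (k : ℕ) < ((Finset.univ : Finset (Fin 5))).card) = Finset.univ from by decide,
      Fin.sum_univ_five, hden3]
    norm_num [Matrix.cons_val_two, Matrix.cons_val_three, Matrix.cons_val_four, hsv3]
  have hg3 : ∀ x, IL (RD x 3) (AD x) = ![1, 1, 1, 0, 9/100] x := by
    intro x; fin_cases x <;> norm_num [Matrix.cons_val_two, Matrix.cons_val_three, Matrix.cons_val_four, IL, hRval, hAdef]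
  have hset3 : ∀ x : Fin 5, {z : Fin 5 | IL (RD x 3) (AD x) ≤ IL (RD z 3) (AD z)} =
      ↑(![({0,1,2} : Finset (Fin 5)), {0,1,2}, {0,1,2}, Finset.univ, {0,1,2,4}] x) := by
    intro x; ext z
    fin_cases x <;> fin_cases z <;> norm_num [Matrix.cons_val_two, Matrix.cons_val_three, Matrix.cons_val_four, hg3] <;> decide
  have hL3 : LD 3 = 47/238 := by
    simp only [hLdef]
    rw [sugeno_eq _ (hμmono 3), sup5]
    simp only [hset3, Matrix.cons_val_zero, Matrix.cons_val_one, Matrix.cons_val_two,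
      Matrix.cons_val_three, Matrix.cons_val_four, Matrix.cons_val_succ, Matrix.head_cons, Matrix.vecHead,
      Matrix.vecTail, Function.comp_apply]
    rw [hm3_0, hm3_1, hm3_2]
    norm_num [Matrix.cons_val_two, Matrix.cons_val_three, Matrix.cons_val_four, hg3, min_def, max_def]
  have hsv4 : ∀ k, sortVal (fun x => RD x 4) k = ![0, 0, 1/5, 91/100, 1] k := by
    have hτ : ((fun x => RD x 4) ∘
        (⟨![0,1,2,3,4], ![0,1,2,3,4], by decide, by decide⟩ : Equiv.Perm (Fin 5)))
        = (fun x => RD x 4) ∘ (Tuple.sort (fun x => RD x 4)) := by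
      rw [Tuple.comp_sort_eq_comp_iff_monotone]
      intro i j hij
      fin_cases i <;> fin_cases j <;> (try exact absurd hij (by decide)) <;>
        norm_num [Matrix.cons_val_two, Matrix.cons_val_three, Matrix.cons_val_four, hRval, Equiv.coe_fn_mk]
    intro k
    have h := congrFun hτ k
    simp only [Function.comp_apply] at h
    rw [sortVal, ← h]
    fin_cases k <;> norm_num [Matrix.cons_val_two, Matrix.cons_val_three, Matrix.cons_val_four, hRval, Equiv.coe_fn_mk]
  have hden4 : (∑ x, RD x 4) = 211/100 := by
    rw [Fin.sum_univ_five]; norm_num [Matrix.cons_val_two, Matrix.cons_val_three, Matrix.cons_val_four, hRval]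
  have hm4_0 : μD 4 ↑({0,1,2} : Finset (Fin 5)) = 20/211 := by
    rw [hμs, show Finset.univ.filter
        (fun k : Fin 5 => (k : ℕ) < (({0,1,2} : Finset (Fin 5))).card) = ({0,1,2} : Finset (Fin 5)) from by decide,
      hs3, hden4]
    norm_num [Matrix.cons_val_two, Matrix.cons_val_three, Matrix.cons_val_four, hsv4]
  have hm4_1 : μD 4 ↑({0,1,2,3} : Finset (Fin 5)) = 111/211 := by
    rw [hμs, show Finset.univ.filter
        (fun k : Fin 5 => (k : ℕ) < (({0,1,2,3} : Finset (Fin 5))).card) = ({0,1,2,3} : Finset (Fin 5)) from by decide,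
      hs4, hden4]
    norm_num [Matrix.cons_val_two, Matrix.cons_val_three, Matrix.cons_val_four, hsv4]
  have hm4_2 : μD 4 ↑(Finset.univ : Finset (Fin 5)) = 1 := by
    rw [hμs, show Finset.univ.filter
        (fun k : Fin 5 => (k : ℕ) < ((Finset.univ : Finset (Fin 5))).card) = Finset.univ from by decide,
      Fin.sum_univ_five, hden4]
    norm_num [Matrix.cons_val_two, Matrix.cons_val_three, Matrix.cons_val_four, hsv4]
  have hg4 : ∀ x, IL (RD x 4) (AD x) = ![1, 1, 1, 9/100, 0] x := by
    intro x; fin_cases x <;> norm_num [Matrix.cons_val_two, Matrix.cons_val_three, Matrix.cons_val_four, IL, hRval, hAdef]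
  have hset4 : ∀ x : Fin 5, {z : Fin 5 | IL (RD x 4) (AD x) ≤ IL (RD z 4) (AD z)} =
      ↑(![({0,1,2} : Finset (Fin 5)), {0,1,2}, {0,1,2}, {0,1,2,3}, Finset.univ] x) := by
    intro x; ext z
    fin_cases x <;> fin_cases z <;> norm_num [Matrix.cons_val_two, Matrix.cons_val_three, Matrix.cons_val_four, hg4] <;> decide
  have hL4 : LD 4 = 20/211 := by
    simp only [hLdef]
    rw [sugeno_eq _ (hμmono 4), sup5]
    simp only [hset4, Matrix.cons_val_zero, Matrix.cons_val_one, Matrix.cons_val_two,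
      Matrix.cons_val_three, Matrix.cons_val_four, Matrix.cons_val_succ, Matrix.head_cons, Matrix.vecHead,
      Matrix.vecTail, Function.comp_apply]
    rw [hm4_0, hm4_1, hm4_2]
    norm_num [Matrix.cons_val_two, Matrix.cons_val_three, Matrix.cons_val_four, hg4, min_def, max_def]
  refine ⟨hteq, ?_, ?_⟩
  · simp only [inf5]
    rw [hL0, hL1, hL2, hL3, hL4]
    norm_num [Matrix.cons_val_two, Matrix.cons_val_three, Matrix.cons_val_four, IL, hRval, min_def]
  · intro hG
    have h3 := hG 3
    have hub : ∀ v ∈ {v | ∃ l ∈ Set.Icc (0:ℝ) 1, ∃ x,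
        (∀ z, TL l (RD x z) ≤ LD z) ∧ v = TL l (RD x 3)}, v ≤ 3899/21100 := by
      rintro v ⟨l, ⟨hl0, hl1⟩, x, hsub, rfl⟩
      have h4 := hsub 4
      rw [hL4] at h4
      fin_cases x <;> simp only [TL, hRval] at h4 ⊢ <;>
        norm_num [Matrix.cons_val_three, Matrix.cons_val_four] at h4 ⊢ <;> linarith
    have hle : LD 3 ≤ 3899/21100 := h3 ▸ Real.sSup_le hub (by norm_num)
    rw [hL3] at hle
    norm_num at hle

/-- the YWIS lower approximation (identity RIM quantifier) of
`A = (1,1,1,0,0)` w.r.t. the given `T_L`-equivalence relation on a 5-element set is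
not a fixed point of the classical lower approximation (it exceeds it at `x₄`), and
is not granularly representable. The measure `μ*_y(E)` is the sum of the `|E|`
smallest values of `R(·,y)`, divided by `∑ x, R(x,y)`. -/
theorem stmt19 :
    let a : Fin 5 → ℝ := ![0, 0, 1/5, 91/100, 1]
    let R : Fin 5 → Fin 5 → ℝ := fun x y => 1 - |a x - a y|
    let A : Fin 5 → ℝ := ![1, 1, 1, 0, 0]
    let μstar : Fin 5 → Set (Fin 5) → ℝ := fun y E =>
      (∑ k ∈ Finset.univ.filter (fun k : Fin 5 => (k : ℕ) < E.toFinite.toFinset.card),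
          sortVal (fun x => R x y) k) / (∑ x, R x y)
    let L : Fin 5 → ℝ := fun y => sugeno (μstar y) (fun x => IL (R x y) (A x))
    IsTEquiv TL R ∧
    Finset.univ.inf' Finset.univ_nonempty (fun x => IL (R x 3) (L x)) < L 3 ∧
    ¬ GranRep TL R L := by
  exact stmt19aux
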